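/- The two-sided continued fraction expansion of the normalized square root of N is palindromic about the index 0: for all i ∈ ℤ, P_{−1−i} = P_i and b_{−i} = b_i. (This is the symmetry of the periodic continued fraction expansion corresponding to the unit reduced form, as in Cohen's lemma, made explicit for the normalized square root.) -/
import Mathlib


/-- Two-sided continued fraction data of the normalized square root of `N`:
`N ≡ 1 (mod 4)` is positive and not a perfect square, `r = ⌊√N⌋`,
`P (-1) = r - 1` if `r` is even and `r` otherwise, `Q 0 = 2`, and the forward
(`i ≥ 0`) and backward (`i ≤ -1`) recursions (with `Int.fdiv` the floor
division on `ℤ`, so that `Int.fdiv x y = ⌊x / y⌋`). -/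
theorem stmt_8 (N : ℤ) (hNpos : 0 < N) (hN4 : N % 4 = 1) (hNsq : ¬ IsSquare N)
    (r : ℤ) (hr : r = ⌊Real.sqrt (N : ℝ)⌋)
    (P Q b : ℤ → ℤ)
    (hP1 : P (-1) = if 2 ∣ r then r - 1 else r)
    (hQ0 : Q 0 = 2)
    (hbf : ∀ i : ℤ, 0 ≤ i → b i = Int.fdiv (r + P (i - 1)) (Q i))
    (hPf : ∀ i : ℤ, 0 ≤ i → P i = b i * Q i - P (i - 1))
    (hQf : ∀ i : ℤ, 0 ≤ i → Q (i + 1) = Int.fdiv (N - P i ^ 2) (Q i))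
    (hQb : ∀ i : ℤ, i ≤ -1 → Q i = Int.fdiv (N - P i ^ 2) (Q (i + 1)))
    (hbb : ∀ i : ℤ, i ≤ -1 → b i = Int.fdiv (r + P i) (Q i))
    (hPb : ∀ i : ℤ, i ≤ -1 → P (i - 1) = b i * Q i - P i) :
    ∀ i : ℤ, P (-1 - i) = P i ∧ b (-i) = b i := by
  -- Key invariant, by induction on nonnegative indices.
  have key : ∀ n : ℕ, P (-1 - (n : ℤ)) = P (n : ℤ) ∧ Q (-(n : ℤ)) = Q (n : ℤ) := by
    intro n
    induction n with
    | zero =>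
      refine ⟨?_, by norm_num⟩
      have hb0 := hbf 0 le_rfl
      have hp0 := hPf 0 le_rfl
      norm_num at hb0 hp0 ⊢
      rw [hp0, hb0, hQ0, hP1]
      by_cases h2r : 2 ∣ r
      · simp only [if_pos h2r]
        rw [Int.fdiv_eq_ediv_of_nonneg _ (by norm_num)]
        omega
      · simp only [if_neg h2r]
        rw [Int.fdiv_eq_ediv_of_nonneg _ (by norm_num)]
        omega
    | succ n ih =>
      obtain ⟨hP, hQ⟩ := ih
      have hPm : P (-((n : ℤ) + 1)) = P (n : ℤ) := by
        have e : -((n : ℤ) + 1) = -1 - (n : ℤ) := by ring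
        rw [e, hP]
      have hQm : Q (-((n : ℤ) + 1)) = Q ((n : ℤ) + 1) := by
        have h1 := hQb (-((n : ℤ) + 1)) (by omega)
        have h2 := hQf (n : ℤ) (by positivity)
        have e : -((n : ℤ) + 1) + 1 = -(n : ℤ) := by ring
        rw [h1, hPm, e, hQ, ← h2]
      have hb : b (-((n : ℤ) + 1)) = b ((n : ℤ) + 1) := by
        have h1 := hbb (-((n : ℤ) + 1)) (by omega)
        have h2 := hbf ((n : ℤ) + 1) (by omega)
        simp only [add_sub_cancel_right] at h2
        rw [h1, hPm, hQm, h2]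
      constructor
      · have h1 := hPb (-((n : ℤ) + 1)) (by omega)
        have h2 := hPf ((n : ℤ) + 1) (by omega)
        simp only [add_sub_cancel_right] at h2
        have e : -1 - (((n : ℕ) + 1 : ℕ) : ℤ) = -((n : ℤ) + 1) - 1 := by push_cast; ring
        rw [e, h1, hb, hQm, hPm, ← h2]
        push_cast
        ring_nf
      · have e : -(((n : ℕ) + 1 : ℕ) : ℤ) = -((n : ℤ) + 1) := by push_cast; ring
        rw [e, hQm]
        push_cast
        ring_nf
  have keyb : ∀ n : ℕ, b (-(n : ℤ)) = b (n : ℤ) := by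
    intro n
    cases n with
    | zero => simp
    | succ m =>
      have hPm : P (-((m : ℤ) + 1)) = P (m : ℤ) := by
        have e : -((m : ℤ) + 1) = -1 - (m : ℤ) := by ring
        rw [e, (key m).1]
      have hQm : Q (-((m : ℤ) + 1)) = Q ((m : ℤ) + 1) := by
        have := (key (m + 1)).2
        push_cast at this
        exact this
      have h1 := hbb (-((m : ℤ) + 1)) (by omega)
      have h2 := hbf ((m : ℤ) + 1) (by omega)
      simp only [add_sub_cancel_right] at h2
      push_cast
      rw [h1, hPm, hQm, h2]
  intro i
  rcases le_or_gt 0 i with h | h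
  · obtain ⟨n, rfl⟩ := Int.eq_ofNat_of_zero_le h
    exact ⟨(key n).1, keyb n⟩
  · -- i < 0: write -i = n with n ≥ 1
    obtain ⟨n, hn⟩ := Int.eq_ofNat_of_zero_le (by omega : (0:ℤ) ≤ -i)
    have hn1 : 1 ≤ n := by omega
    obtain ⟨m, rfl⟩ := Nat.exists_eq_add_of_le hn1
    have hi : i = -((m : ℤ) + 1) := by push_cast at hn; omega
    subst hi
    constructor
    · have e : -1 - (-((m : ℤ) + 1)) = (m : ℤ) := by ring
      rw [e]
      have e2 : -1 - (m : ℤ) = -((m : ℤ) + 1) := by ring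
      have := (key m).1
      rw [e2] at this
      exact this.symm
    · have e : -(-((m : ℤ) + 1)) = ((m : ℤ) + 1) := by ring
      rw [e]
      have := keyb (m + 1)
      push_cast at this
      exact this.symm
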